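/- Let p > 0, ε ∈ (0,1] and k an integer with 1 ≤ k ≤ n/2, and let J be the set of indices j ∈ {0,1,…,⌈t⌉−1} for which the level set S_j does not contribute (for the trimmed-k problem). Then Σ_{j∈J} Σ_{i∈S_j} |x_i|^p ≤ 5·ε · (Σ_{i=k+1}^{n−k} |a_i|^p + k·|a_k|^p). -/

import Mathlib

open Finset

noncomputable section

/-- `t = 1 + log_{1+ε} m`, all logarithms natural. -/
def tExp (ε m : ℝ) : ℝ := 1 + Real.log m / Real.log (1 + ε)

/-- The level set `S_j = {i : ζ(1+ε)^{t-j-1} ≤ |x_i| < ζ(1+ε)^{t-j}}`. -/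
def levelSet {n : ℕ} (x : Fin n → ℤ) (ε m ζ : ℝ) (j : ℕ) : Finset (Fin n) :=
  Finset.univ.filter fun i =>
    ζ * (1 + ε) ^ (tExp ε m - (j : ℝ) - 1) ≤ |(x i : ℝ)| ∧
      |(x i : ℝ)| < ζ * (1 + ε) ^ (tExp ε m - (j : ℝ))

/-- `rank(v)`: the number of indices with `|x_i| > v`. -/
def rankOf {n : ℕ} (x : Fin n → ℤ) (v : ℝ) : ℕ :=
  (Finset.univ.filter fun i : Fin n => v < |(x i : ℝ)|).card

/-- `Σ_{i=1}^k |a_i|^p` (paper is 1-indexed; here `a` is 0-indexed). -/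
def topSum {n : ℕ} (a : Fin n → ℤ) (p : ℝ) (k : ℕ) : ℝ :=
  ∑ i ∈ Finset.univ.filter (fun i : Fin n => (i : ℕ) < k), |(a i : ℝ)| ^ p

/-- `Σ_{i=k+1}^n |a_i|^p = ‖x_{-k}‖_p^p` (paper is 1-indexed). -/
def tailSum {n : ℕ} (a : Fin n → ℤ) (p : ℝ) (k : ℕ) : ℝ :=
  ∑ i ∈ Finset.univ.filter (fun i : Fin n => k ≤ (i : ℕ)), |(a i : ℝ)| ^ p

/-- `Σ_{i=k+1}^{n-k} |a_i|^p` (paper is 1-indexed). -/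
def midSum {n : ℕ} (a : Fin n → ℤ) (p : ℝ) (k : ℕ) : ℝ :=
  ∑ i ∈ Finset.univ.filter (fun i : Fin n => k ≤ (i : ℕ) ∧ (i : ℕ) < n - k), |(a i : ℝ)| ^ p

/-- `|a_k|` for paper (1-indexed) index `k`, i.e. 0-indexed entry `k-1`. -/
def aAbs {n : ℕ} (a : Fin n → ℤ) (k : ℕ) : ℝ :=
  if h : k - 1 < n then |(a ⟨k - 1, h⟩ : ℝ)| else 0

/-- `a` is `x` rearranged in non-increasing order of absolute value. -/
def IsRearrangement {n : ℕ} (x a : Fin n → ℤ) : Prop :=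
  (∃ σ : Equiv.Perm (Fin n), ∀ i, a i = x (σ i)) ∧
    ∀ i i' : Fin n, i ≤ i' → |a i'| ≤ |a i|

/-- The level set `S_j` contributes (for the top-`k` problem with exponent `p`). -/
def ContributesTop {n : ℕ} (x a : Fin n → ℤ) (p ε m ζ : ℝ) (j k : ℕ) : Prop :=
  ε ^ 2 / Real.log m * topSum a p k ≤ ∑ i ∈ levelSet x ε m ζ j, |(x i : ℝ)| ^ p

/-- The level set `S_j` contributes (for the trimmed-`k` problem with exponent `p`). -/
def ContributesTrim {n : ℕ} (x a : Fin n → ℤ) (p ε m ζ : ℝ) (j k : ℕ) : Prop :=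
  ε ^ 2 / Real.log m * (midSum a p k + k * aAbs a k ^ p) ≤
    ∑ i ∈ levelSet x ε m ζ j, |(x i : ℝ)| ^ p

open scoped Classical in
/-- the total `F_p` mass of the non-contributing level sets (trimmed-`k` problem),
over `j ∈ {0,…,⌈t⌉−1}`, is at most `5ε · (Σ_{i=k+1}^{n−k} |a_i|^p + k·|a_k|^p)`. -/
theorem stmt_11 (n : ℕ) (hn : 2 ≤ n) (x a : Fin n → ℤ) (p ε m ζ : ℝ) (k : ℕ)
    (hp : 0 < p) (hε1 : 0 < ε) (hε2 : ε ≤ 1) (hk1 : 1 ≤ k) (hk2 : 2 * k ≤ n)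
    (hra : IsRearrangement x a)
    (hxm : ∀ i, |(x i : ℝ)| ≤ m) (hm1 : 2 ≤ m) (hm2 : m ≤ (n : ℝ))
    (hζ1 : 1 / 2 ≤ ζ) (hζ2 : ζ ≤ 1) :
    ∑ j ∈ (Finset.range (Nat.ceil (tExp ε m))).filter
        (fun j => ¬ ContributesTrim x a p ε m ζ j k),
      ∑ i ∈ levelSet x ε m ζ j, |(x i : ℝ)| ^ p ≤
      5 * ε * (midSum a p k + k * aAbs a k ^ p) := by

  have hlogm : 0 < Real.log m := Real.log_pos (by linarith)
  set B := midSum a p k + (k : ℝ) * aAbs a k ^ p with hBdef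
  have hB0 : 0 ≤ B := by
    apply add_nonneg
    · exact Finset.sum_nonneg fun i _ => Real.rpow_nonneg (abs_nonneg _) _
    · refine mul_nonneg (Nat.cast_nonneg _) (Real.rpow_nonneg ?_ _)
      unfold aAbs
      split
      · exact abs_nonneg _
      · exact le_refl 0
  set J := (Finset.range (Nat.ceil (tExp ε m))).filter
      (fun j => ¬ ContributesTrim x a p ε m ζ j k) with hJ
  have hc : ∀ j ∈ J, ∑ i ∈ levelSet x ε m ζ j, |(x i : ℝ)| ^ p ≤ ε ^ 2 / Real.log m * B := by
    intro j hj
    rw [hJ, Finset.mem_filter] at hj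
    have := hj.2
    rw [ContributesTrim, not_le] at this
    exact this.le
  have hcard : (J.card : ℝ) ≤ 2 + 2 * Real.log m / ε := by
    have h1 : (J.card : ℝ) ≤ (Nat.ceil (tExp ε m) : ℝ) := by
      exact_mod_cast Finset.card_filter_le _ _ |>.trans (by simp)
    have ht0 : 0 ≤ tExp ε m := by
      have h0 : 0 ≤ Real.log m / Real.log (1 + ε) :=
        div_nonneg hlogm.le (Real.log_nonneg (by linarith))
      unfold tExp; linarith
    have h2 : (Nat.ceil (tExp ε m) : ℝ) < tExp ε m + 1 := Nat.ceil_lt_add_one ht0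
    have hlog1e : ε / 2 ≤ Real.log (1 + ε) := by
      have := Real.one_sub_inv_le_log_of_pos (show (0:ℝ) < 1 + ε by linarith)
      rw [inv_eq_one_div] at this
      have h1e : (0:ℝ) < 1 + ε := by linarith
      have heq : 1 - 1 / (1 + ε) = ε / (1 + ε) := by field_simp; ring
      have h3 : ε / 2 ≤ 1 - 1 / (1 + ε) := by
        rw [heq, div_le_div_iff₀ (by norm_num) h1e]
        nlinarith
      linarith
    have hlog1e0 : 0 < Real.log (1 + ε) := lt_of_lt_of_le (by linarith) hlog1e
    have h4 : Real.log m / Real.log (1 + ε) ≤ 2 * Real.log m / ε := by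
      rw [div_le_div_iff₀ hlog1e0 hε1]
      nlinarith
    unfold tExp at h1 h2
    linarith
  calc ∑ j ∈ J, ∑ i ∈ levelSet x ε m ζ j, |(x i : ℝ)| ^ p
      ≤ J.card • (ε ^ 2 / Real.log m * B) := Finset.sum_le_card_nsmul _ _ _ hc
    _ = (J.card : ℝ) * (ε ^ 2 / Real.log m * B) := nsmul_eq_mul _ _
    _ ≤ (2 + 2 * Real.log m / ε) * (ε ^ 2 / Real.log m * B) := by
        apply mul_le_mul_of_nonneg_right hcard
        positivity
    _ ≤ 5 * ε * B := by
        have hlog2 : Real.log 2 ≤ Real.log m := Real.log_le_log (by norm_num) hm1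
        have hl2 : (0.6931471803 : ℝ) < Real.log 2 := Real.log_two_gt_d9
        have key : (2 + 2 * Real.log m / ε) * (ε ^ 2 / Real.log m) ≤ 5 * ε := by
          rw [mul_div_assoc', div_le_iff₀ hlogm]
          have hexp : (2 + 2 * Real.log m / ε) * ε ^ 2
              = 2 * ε ^ 2 + 2 * Real.log m * ε := by
            field_simp
          rw [hexp]
          nlinarith [mul_le_mul_of_nonneg_left
            (show 2 * ε ≤ 3 * Real.log m by linarith) hε1.le]
        rw [← mul_assoc]
        exact mul_le_mul_of_nonneg_right key hB0
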